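/- The edge isoperimetric peak of the complete binary tree B_d of depth d (with 2^d − 1 vertices) satisfies max_{1 ≤ i ≤ 2^d − 1} δ(i, B_d) ≥ ⌊d/3⌋ − 1, where δ(i, B_d) is the minimum number of edges in a cut (X, X̄) over all vertex subsets X of B_d with |X| = i. -/

import Mathlib

def nu (d : ℕ) : ℕ := 2 ^ d - 1

def IsABP (n : ℕ) (P : Multiset ℕ) : Prop :=
  (∀ i ∈ P, 1 ≤ i) ∧ (P.map nu).sum = n

noncomputable def tauP (n : ℕ) : ℕ :=
  sInf {k | ∃ P : Multiset ℕ, IsABP n P ∧ P.card = k}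

def IsSABP (n : ℕ) (P N : Multiset ℕ) : Prop :=
  (∀ i ∈ P, 1 ≤ i) ∧ (∀ j ∈ N, 1 ≤ j) ∧
    (n : ℤ) = ((P.map nu).sum : ℤ) - ((N.map nu).sum : ℤ)

noncomputable def tau (n : ℕ) : ℕ :=
  sInf {k | ∃ P N : Multiset ℕ, IsSABP n P N ∧ P.card + N.card = k}

noncomputable def tauC (n : ℕ) : ℕ :=
  sInf {k | ∃ (r : ℕ) (N : Multiset ℕ), IsSABP n {r} N ∧ 1 + N.card = k}

def greedy : ℕ → Multiset ℕ
  | 0 => 0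
  | (n+1) => Nat.log 2 (n+2) ::ₘ greedy (n + 1 - nu (Nat.log 2 (n+2)))
  decreasing_by
    have h1 : 0 < Nat.log 2 (n+2) := Nat.log_pos one_lt_two (by omega)
    have h2 : 2 ^ 1 ≤ 2 ^ Nat.log 2 (n+2) := Nat.pow_le_pow_right (by norm_num) h1
    simp only [nu] at *
    omega

open Classical in
noncomputable def dualf (n : ℕ) : ℕ :=
  if ∃ k : ℕ, 1 ≤ k ∧ n = 2 ^ k - 1 then n else 3 * 2 ^ Nat.log 2 n - n - 2

def parentT (v : ℕ × ℕ) : ℕ × ℕ := (v.1 + 1, v.2 / 2)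

def levelT (v : ℕ × ℕ) : ℕ := v.1 + 1

def treeGraph : SimpleGraph (ℕ × ℕ) where
  Adj u v := parentT u = v ∨ parentT v = u
  symm := ⟨by intro u v h; tauto⟩
  loopless := ⟨by intro v h; simp [parentT, Prod.ext_iff] at h⟩

noncomputable def cutCard (S : Finset (ℕ × ℕ)) : ℕ :=
  Set.ncard {v : ℕ × ℕ | ¬ ((v ∈ S) ↔ (parentT v ∈ S))}

def leafCount (S : Finset (ℕ × ℕ)) : ℕ := (S.filter (fun v => v.1 = 0)).card

def completeSubtree (v : ℕ × ℕ) : Finset (ℕ × ℕ) :=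
  (Finset.range (v.1 + 1)).biUnion (fun a =>
    (Finset.Ico (v.2 * 2 ^ (v.1 - a)) ((v.2 + 1) * 2 ^ (v.1 - a))).image (fun i => (a, i)))

def Bd (d : ℕ) : Finset (ℕ × ℕ) := completeSubtree (d - 1, 0)

def cutBd (d : ℕ) (X : Finset (ℕ × ℕ)) : ℕ :=
  ((Bd d).filter (fun v => v.1 + 1 < d ∧ ¬((v ∈ X) ↔ parentT v ∈ X))).card

noncomputable def deltaB (d i : ℕ) : ℕ :=
  sInf {c | ∃ X ⊆ Bd d, X.card = i ∧ cutBd d X = c}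

noncomputable def tauC0 (n : ℕ) : ℕ := if n = 0 then 0 else tauC n

def fS (S : Finset (ℕ × ℕ)) (v : ℕ × ℕ) : ℤ :=
  if v ∈ S ∧ parentT v ∉ S then 2 ^ levelT v - 1
  else if v ∉ S ∧ parentT v ∈ S then -(2 ^ levelT v - 1)
  else 0

def Tz : ℤ → ℕ := fun x =>
  if h : x = 0 ∨ x = -1 then 0
  else (if x % 2 = (x / 2) % 2 then 0 else 1) + Tz (x / 2)
  termination_by x => x.natAbs
  decreasing_by
    push_neg at h
    omega

lemma Tz_zero : Tz 0 = 0 := by rw [Tz]; simp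

lemma Tz_negone : Tz (-1) = 0 := by rw [Tz]; simp

lemma Tz_bit (x r : ℤ) (hr : r = 0 ∨ r = 1) :
    Tz (2 * x + r) = (if r = x % 2 then 0 else 1) + Tz x := by
  by_cases h : 2 * x + r = 0 ∨ 2 * x + r = -1
  · have hx : (x = 0 ∧ r = 0) ∨ (x = -1 ∧ r = 1) := by omega
    rcases hx with ⟨hx, hr⟩ | ⟨hx, hr⟩ <;> subst hx <;> subst hr <;>
      simp [Tz_zero, Tz_negone]
  · rw [Tz]
    rw [dif_neg h]
    have h1 : (2 * x + r) / 2 = x := by omega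
    have h2 : (2 * x + r) % 2 = r := by omega
    rw [h1, h2]

lemma Tz_pm_one : ∀ x : ℤ, Tz (x + 1) ≤ Tz x + 1 ∧ Tz (x - 1) ≤ Tz x + 1 := by
  have H : ∀ N : ℕ, ∀ x : ℤ, x.natAbs ≤ N →
      Tz (x + 1) ≤ Tz x + 1 ∧ Tz (x - 1) ≤ Tz x + 1 := by
    intro N
    induction N with
    | zero =>
      intro x hx
      have : x = 0 := by omega
      subst this
      have h1 : Tz 1 = 1 := by
        have := Tz_bit 0 1 (by omega); simpa [Tz_zero] using this
      have h2 : Tz (0 - 1) = 0 := by norm_num [Tz_negone]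
      simp only [zero_add, Tz_zero, h1, h2]
      omega
    | succ N ih =>
      intro x hx
      by_cases hsmall : x.natAbs ≤ 1
      · -- x ∈ {0, 1, -1}
        have h1 : Tz 1 = 1 := by
          have := Tz_bit 0 1 (by omega); simpa [Tz_zero] using this
        have h2 : Tz 2 = 2 := by
          have := Tz_bit 1 0 (by omega); simp [h1] at this; omega
        have hm2 : Tz (-2) = 1 := by
          have := Tz_bit (-1) 0 (by omega)
          norm_num [Tz_negone] at this
          omega
        have hb1 : (-1 : ℤ) ≤ x := by omega
        have hb2 : x ≤ 1 := by omega
        interval_cases x <;>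
          simp [Tz_zero, Tz_negone, h1, h2, hm2] <;> norm_num [Tz_zero, h1, hm2]
      · set q := x / 2 with hq
        set r := x % 2 with hr
        have hx2 : x = 2 * q + r := by omega
        have hrr : r = 0 ∨ r = 1 := by omega
        have hqN : q.natAbs ≤ N := by omega
        have hq1N : (q + 1).natAbs ≤ N ∨ q.natAbs ≤ N := by omega
        obtain ⟨ihq1, ihq2⟩ := ih q hqN
        constructor
        · -- Tz (x+1) ≤ Tz x + 1
          rcases hrr with h0 | h1
          · -- x even : x + 1 = 2q+1
            have e1 : Tz (x + 1) = (if 1 = q % 2 then 0 else 1) + Tz q := by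
              rw [show x + 1 = 2 * q + 1 by omega]; exact Tz_bit q 1 (by omega)
            have e2 : Tz x = (if 0 = q % 2 then 0 else 1) + Tz q := by
              rw [hx2, h0]; exact Tz_bit q 0 (by omega)
            have : q % 2 = 0 ∨ q % 2 = 1 := by omega
            rcases this with h | h <;> simp [h] at e1 e2 <;> omega
          · -- x odd : x + 1 = 2(q+1)
            have e1 : Tz (x + 1) = (if 0 = (q+1) % 2 then 0 else 1) + Tz (q+1) := by
              rw [show x + 1 = 2 * (q+1) + 0 by omega]; exact Tz_bit (q+1) 0 (by omega)
            have e2 : Tz x = (if 1 = q % 2 then 0 else 1) + Tz q := by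
              rw [hx2, h1]; exact Tz_bit q 1 (by omega)
            have hpar : (q + 1) % 2 = 1 - q % 2 := by omega
            have : q % 2 = 0 ∨ q % 2 = 1 := by omega
            rcases this with h | h <;> rw [hpar, h] at e1 <;> simp [h] at e1 e2 <;> omega
        · -- Tz (x-1) ≤ Tz x + 1
          obtain ⟨_, ihq3⟩ := ih q hqN
          rcases hrr with h0 | h1
          · -- x even: x - 1 = 2(q-1)+1
            have e1 : Tz (x - 1) = (if 1 = (q-1) % 2 then 0 else 1) + Tz (q-1) := by
              rw [show x - 1 = 2 * (q-1) + 1 by omega]; exact Tz_bit (q-1) 1 (by omega)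
            have e2 : Tz x = (if 0 = q % 2 then 0 else 1) + Tz q := by
              rw [hx2, h0]; exact Tz_bit q 0 (by omega)
            have hpar : (q - 1) % 2 = 1 - q % 2 := by omega
            have : q % 2 = 0 ∨ q % 2 = 1 := by omega
            rcases this with h | h <;> rw [hpar, h] at e1 <;> simp [h] at e1 e2 <;> omega
          · -- x odd: x - 1 = 2q
            have e1 : Tz (x - 1) = (if 0 = q % 2 then 0 else 1) + Tz q := by
              rw [show x - 1 = 2 * q + 0 by omega]; exact Tz_bit q 0 (by omega)
            have e2 : Tz x = (if 1 = q % 2 then 0 else 1) + Tz q := by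
              rw [hx2, h1]; exact Tz_bit q 1 (by omega)
            have : q % 2 = 0 ∨ q % 2 = 1 := by omega
            rcases this with h | h <;> simp [h] at e1 e2 <;> omega
  intro x
  exact H x.natAbs x le_rfl

lemma Tz_pm_pow : ∀ (k : ℕ) (x : ℤ), Tz (x + 2 ^ k) ≤ Tz x + 2 ∧ Tz (x - 2 ^ k) ≤ Tz x + 2 := by
  intro k
  induction k with
  | zero =>
    intro x
    obtain ⟨h1, h2⟩ := Tz_pm_one x
    constructor <;> simpa using by omega
  | succ k ih =>
    intro x
    set q := x / 2 with hq
    set r := x % 2 with hr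
    have hx2 : x = 2 * q + r := by omega
    have hrr : r = 0 ∨ r = 1 := by omega
    have hpow : (2 : ℤ) ^ (k + 1) = 2 * 2 ^ k := by ring
    have e2 : Tz x = (if r = q % 2 then 0 else 1) + Tz q := by
      rw [hx2]; exact Tz_bit q r hrr
    have eplus : Tz (x + 2 ^ (k+1)) = (if r = (q + 2 ^ k) % 2 then 0 else 1) + Tz (q + 2 ^ k) := by
      rw [show x + 2 ^ (k+1) = 2 * (q + 2 ^ k) + r by rw [hpow]; omega]
      exact Tz_bit _ r hrr
    have eminus : Tz (x - 2 ^ (k+1)) = (if r = (q - 2 ^ k) % 2 then 0 else 1) + Tz (q - 2 ^ k) := by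
      rw [show x - 2 ^ (k+1) = 2 * (q - 2 ^ k) + r by rw [hpow]; omega]
      exact Tz_bit _ r hrr
    rcases Nat.eq_zero_or_pos k with hk | hk
    · subst hk
      rw [show x + 2 ^ (0+1) = x + 2 by norm_num, show x - 2 ^ (0+1) = x - 2 by norm_num]
      rw [show x + 2 ^ (0+1) = x + 2 by norm_num] at eplus
      rw [show x - 2 ^ (0+1) = x - 2 by norm_num] at eminus
      obtain ⟨h1, h2⟩ := Tz_pm_one q
      have hp1 : (q + 2 ^ 0) % 2 = 1 - q % 2 := by simp; omega
      have hp2 : (q - 2 ^ 0) % 2 = 1 - q % 2 := by simp; omega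
      rw [hp1] at eplus; rw [hp2] at eminus
      have hq1 : Tz (q + 2 ^ 0) = Tz (q + 1) := by norm_num
      have hq2 : Tz (q - 2 ^ 0) = Tz (q - 1) := by norm_num
      rw [hq1] at eplus; rw [hq2] at eminus
      have hqr : q % 2 = 0 ∨ q % 2 = 1 := by omega
      constructor <;> rcases hrr with h | h <;> rcases hqr with h' | h' <;>
        simp [h, h'] at eplus eminus e2 <;> omega
    · have heven : (2 : ℤ) ^ k % 2 = 0 := by
        have : (2 : ℤ) ^ k = 2 * 2 ^ (k - 1) := by
          rw [← pow_succ']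
          congr 1
          omega
        omega
      have hp1 : (q + 2 ^ k) % 2 = q % 2 := by omega
      have hp2 : (q - 2 ^ k) % 2 = q % 2 := by omega
      rw [hp1] at eplus; rw [hp2] at eminus
      obtain ⟨h1, h2⟩ := ih q
      constructor <;> omega

lemma Tz_pm_nu (x : ℤ) (k : ℕ) :
    Tz (x + (2 ^ k - 1)) ≤ Tz x + 3 ∧ Tz (x - (2 ^ k - 1)) ≤ Tz x + 3 := by
  obtain ⟨h1, h2⟩ := Tz_pm_one x
  obtain ⟨h3, h4⟩ := Tz_pm_pow k (x - 1)
  obtain ⟨h5, h6⟩ := Tz_pm_pow k (x + 1)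
  constructor
  · calc Tz (x + (2 ^ k - 1)) = Tz ((x - 1) + 2 ^ k) := by ring_nf
    _ ≤ Tz (x - 1) + 2 := h3
    _ ≤ Tz x + 3 := by omega
  · calc Tz (x - (2 ^ k - 1)) = Tz ((x + 1) - 2 ^ k) := by ring_nf
    _ ≤ Tz (x + 1) + 2 := h6
    _ ≤ Tz x + 3 := by omega

lemma Tz_sum (F : Finset (ℕ × ℕ)) (g : ℕ × ℕ → ℤ)
    (hg : ∀ w ∈ F, ∃ k : ℕ, g w = 2 ^ k - 1 ∨ g w = -(2 ^ k - 1)) :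
    Tz (∑ w ∈ F, g w) ≤ 3 * F.card := by
  classical
  induction F using Finset.induction_on with
  | empty => simp [Tz_zero]
  | @insert a s hnot ih =>
    rw [Finset.sum_insert hnot, Finset.card_insert_of_notMem hnot]
    obtain ⟨k, hk⟩ := hg a (Finset.mem_insert_self a s)
    have hrest : Tz (∑ w ∈ s, g w) ≤ 3 * s.card :=
      ih (fun w hw => hg w (Finset.mem_insert_of_mem hw))
    obtain ⟨h1, h2⟩ := Tz_pm_nu (∑ w ∈ s, g w) k
    rcases hk with h | h <;> rw [h]
    · rw [add_comm]; omega
    · rw [show -(2 ^ k - 1) + ∑ w ∈ s, g w = (∑ w ∈ s, g w) - (2 ^ k - 1) by ring]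
      omega

def nAlt : ℕ → ℕ
  | 0 => 0
  | (p+1) => 4 * nAlt p + 1

lemma nAlt_lt (p : ℕ) : nAlt p < 4 ^ p := by
  induction p with
  | zero => simp [nAlt]
  | succ p ih => simp [nAlt]; omega

lemma nAlt_pos (p : ℕ) : 1 ≤ nAlt (p + 1) := by show 1 ≤ 4 * nAlt p + 1; omega

lemma nAlt_odd (p : ℕ) : (nAlt (p+1) : ℤ) % 2 = 1 := by
  have : nAlt (p+1) = 4 * nAlt p + 1 := rfl
  rw [this]; push_cast; omega

lemma Tz_one : Tz 1 = 1 := by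
  have h := Tz_bit 0 1 (by omega)
  simpa [Tz_zero] using h

lemma Tz_nAlt (p : ℕ) : Tz ((nAlt (p+1) : ℤ)) = 2 * p + 1 := by
  induction p with
  | zero =>
    have h : (nAlt 1 : ℤ) = 1 := by norm_num [nAlt]
    rw [h, Tz_one]
  | succ p ih =>
    have hodd := nAlt_odd p
    set x := (nAlt (p+1) : ℤ) with hx
    have hcast : (nAlt (p+1+1) : ℤ) = 2 * (2 * x + 0) + 1 := by
      show ((4 * nAlt (p+1) + 1 : ℕ) : ℤ) = _
      push_cast; ring
    rw [hcast, Tz_bit (2 * x + 0) 1 (by omega)]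
    rw [Tz_bit x 0 (by omega)]
    have h1 : ¬ ((1 : ℤ) = (2 * x + 0) % 2) := by omega
    have h2 : ¬ ((0 : ℤ) = x % 2) := by omega
    rw [if_neg h1, if_neg h2]
    omega

lemma mem_cs {a i b j : ℕ} :
    (b, j) ∈ completeSubtree (a, i) ↔ b ≤ a ∧ i * 2 ^ (a - b) ≤ j ∧ j < (i + 1) * 2 ^ (a - b) := by
  simp only [completeSubtree, Finset.mem_biUnion, Finset.mem_range, Finset.mem_image,
    Finset.mem_Ico, Prod.mk.injEq]
  constructor
  · rintro ⟨a', ha', x, ⟨hx1, hx2⟩, rfl, rfl⟩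
    exact ⟨by omega, hx1, hx2⟩
  · rintro ⟨hb, h1, h2⟩
    exact ⟨b, by omega, j, ⟨h1, h2⟩, rfl, rfl⟩

lemma self_mem_cs {a i : ℕ} : (a, i) ∈ completeSubtree (a, i) := by
  rw [mem_cs]
  simp

lemma cs_split (a i : ℕ) :
    completeSubtree (a + 1, i) =
      insert (a + 1, i) (completeSubtree (a, 2 * i) ∪ completeSubtree (a, 2 * i + 1)) := by
  ext ⟨b, j⟩
  simp only [mem_cs, Finset.mem_insert, Finset.mem_union, Prod.mk.injEq]
  by_cases hba : b ≤ a
  · have he : a + 1 - b = (a - b) + 1 := by omega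
    rw [he, pow_succ]
    have hq : 1 ≤ 2 ^ (a - b) := Nat.one_le_two_pow
    have e1 : i * (2 ^ (a - b) * 2) = 2 * (i * 2 ^ (a - b)) := by ring
    have e2 : (i + 1) * (2 ^ (a - b) * 2) = 2 * (i * 2 ^ (a - b)) + 2 * 2 ^ (a - b) := by ring
    have e3 : 2 * i * 2 ^ (a - b) = 2 * (i * 2 ^ (a - b)) := by ring
    have e4 : (2 * i + 1) * 2 ^ (a - b) = 2 * (i * 2 ^ (a - b)) + 2 ^ (a - b) := by ring
    have e5 : (2 * i + 1 + 1) * 2 ^ (a - b) = 2 * (i * 2 ^ (a - b)) + 2 * 2 ^ (a - b) := by ring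
    rw [e1, e2, e3, e4, e5]
    have hb1 : ¬ (b = a + 1) := by omega
    simp only [hba, hb1, true_and, false_and, false_or]
    omega
  · by_cases hb1 : b = a + 1
    · subst hb1
      simp only [Nat.sub_self, pow_zero, mul_one]
      constructor
      · rintro ⟨-, h1, h2⟩; left; exact ⟨trivial, by omega⟩
      · rintro (⟨-, h⟩ | ⟨h, -⟩ | ⟨h, -⟩) <;> omega
    · constructor
      · rintro ⟨h, -⟩; omega
      · rintro (⟨h, -⟩ | ⟨h, -⟩ | ⟨h, -⟩) <;> omega

lemma cs_disj (a i : ℕ) :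
    Disjoint (completeSubtree (a, 2 * i)) (completeSubtree (a, 2 * i + 1)) := by
  rw [Finset.disjoint_left]
  rintro ⟨b, j⟩ h1 h2
  rw [mem_cs] at h1 h2
  omega

lemma root_notmem (a i : ℕ) :
    (a + 1, i) ∉ completeSubtree (a, 2 * i) ∪ completeSubtree (a, 2 * i + 1) := by
  rw [Finset.mem_union, mem_cs, mem_cs]
  omega

lemma parent_mem_cs {a i : ℕ} {w : ℕ × ℕ} (hw : w ∈ completeSubtree (a, i))
    (hne : w ≠ (a, i)) : parentT w ∈ completeSubtree (a, i) := by
  obtain ⟨b, j⟩ := w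
  rw [mem_cs] at hw
  have hba : b < a := by
    rcases Nat.lt_or_ge b a with h | h
    · exact h
    · exfalso
      have hb : b = a := by omega
      subst hb
      simp only [Nat.sub_self, pow_zero, mul_one] at hw
      have : j = i := by omega
      subst this
      exact hne rfl
  show ((b + 1 : ℕ), j / 2) ∈ _
  rw [mem_cs]
  have he : a - b = (a - (b + 1)) + 1 := by omega
  rw [he, pow_succ] at hw
  have e1 : i * (2 ^ (a - (b + 1)) * 2) = 2 * (i * 2 ^ (a - (b + 1))) := by ring
  have e2 : (i + 1) * (2 ^ (a - (b + 1)) * 2)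
      = 2 * (i * 2 ^ (a - (b + 1))) + 2 * 2 ^ (a - (b + 1)) := by ring
  have e3 : (i + 1) * 2 ^ (a - (b + 1)) = i * 2 ^ (a - (b + 1)) + 2 ^ (a - (b + 1)) := by ring
  rw [e1, e2] at hw
  rw [e3]
  omega

lemma card_cs (a i : ℕ) : (completeSubtree (a, i)).card = 2 ^ (a + 1) - 1 := by
  induction a generalizing i with
  | zero =>
    have : completeSubtree (0, i) = {(0, i)} := by
      ext ⟨b, j⟩
      simp only [Finset.mem_singleton, Prod.mk.injEq]
      constructor
      · intro h
        rw [mem_cs] at h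
        obtain ⟨hb, h1, h2⟩ := h
        have hb0 : b = 0 := by omega
        subst hb0
        simp only [Nat.sub_zero, pow_zero, mul_one] at h1 h2
        exact ⟨rfl, by omega⟩
      · rintro ⟨rfl, rfl⟩
        exact self_mem_cs
    rw [this]
    simp
  | succ a ih =>
    rw [cs_split, Finset.card_insert_of_notMem (root_notmem a i),
      Finset.card_union_of_disjoint (cs_disj a i), ih (2 * i), ih (2 * i + 1)]
    have : 1 ≤ 2 ^ (a + 1) := Nat.one_le_two_pow
    have h2 : 2 ^ (a + 1 + 1) = 2 * 2 ^ (a + 1) := by ring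
    omega

lemma key_identity : ∀ (a i : ℕ) (X : Finset (ℕ × ℕ)), X ⊆ completeSubtree (a, i) →
    (X.card : ℤ) = (∑ w ∈ (completeSubtree (a, i)).erase (a, i), fS X w)
      + (if (a, i) ∈ X then 2 ^ (a + 1) - 1 else 0) := by
  intro a
  induction a with
  | zero =>
    intro i X hX
    have hsing : completeSubtree (0, i) = {(0, i)} := by
      ext ⟨b, j⟩
      simp only [Finset.mem_singleton, Prod.mk.injEq]
      constructor
      · intro h
        rw [mem_cs] at h
        obtain ⟨hb, h1, h2⟩ := h
        have hb0 : b = 0 := by omega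
        subst hb0
        simp only [Nat.sub_zero, pow_zero, mul_one] at h1 h2
        exact ⟨rfl, by omega⟩
      · rintro ⟨rfl, rfl⟩
        exact self_mem_cs
    rw [hsing] at hX ⊢
    rw [Finset.erase_singleton]
    rcases Finset.subset_singleton_iff.mp hX with h | h <;> subst h <;> simp
  | succ a ih =>
    intro i X hX
    classical
    have hsplit := cs_split a i
    have hnotmem := root_notmem a i
    have hdisj := cs_disj a i
    have herase : (completeSubtree (a + 1, i)).erase (a + 1, i)
        = completeSubtree (a, 2 * i) ∪ completeSubtree (a, 2 * i + 1) := by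
      rw [hsplit, Finset.erase_insert hnotmem]
    have hprl : parentT (a, 2 * i) = (a + 1, i) := by
      show ((a + 1 : ℕ), (2 * i) / 2) = (a + 1, i)
      norm_num
    have hprr : parentT (a, 2 * i + 1) = (a + 1, i) := by
      show ((a + 1 : ℕ), (2 * i + 1) / 2) = (a + 1, i)
      congr 1
      omega
    have hXlsub : X ∩ completeSubtree (a, 2 * i) ⊆ completeSubtree (a, 2 * i) :=
      Finset.inter_subset_right
    have hXrsub : X ∩ completeSubtree (a, 2 * i + 1) ⊆ completeSubtree (a, 2 * i + 1) :=
      Finset.inter_subset_right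
    have ihl := ih (2 * i) _ hXlsub
    have ihr := ih (2 * i + 1) _ hXrsub
    -- congruence of fS between X and X ∩ C on the erased subtree
    have hcongr : ∀ (ii : ℕ), ∀ w ∈ (completeSubtree (a, ii)).erase (a, ii),
        fS (X ∩ completeSubtree (a, ii)) w = fS X w := by
      intro ii w hw
      obtain ⟨hwne, hwC⟩ := Finset.mem_erase.mp hw
      have hpw : parentT w ∈ completeSubtree (a, ii) := parent_mem_cs hwC hwne
      have h1 : (w ∈ X ∩ completeSubtree (a, ii)) = (w ∈ X) := by
        simp [Finset.mem_inter, hwC]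
      have h2 : (parentT w ∈ X ∩ completeSubtree (a, ii)) = (parentT w ∈ X) := by
        simp [Finset.mem_inter, hpw]
      simp only [fS, h1, h2]
    have hsuml : (∑ w ∈ (completeSubtree (a, 2 * i)).erase (a, 2 * i), fS X w)
        = ((X ∩ completeSubtree (a, 2 * i)).card : ℤ)
          - (if (a, 2 * i) ∈ X ∩ completeSubtree (a, 2 * i) then 2 ^ (a + 1) - 1 else 0) := by
      rw [← Finset.sum_congr rfl (hcongr (2 * i))]
      rw [ihl]
      ring
    have hsumr : (∑ w ∈ (completeSubtree (a, 2 * i + 1)).erase (a, 2 * i + 1), fS X w)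
        = ((X ∩ completeSubtree (a, 2 * i + 1)).card : ℤ)
          - (if (a, 2 * i + 1) ∈ X ∩ completeSubtree (a, 2 * i + 1) then 2 ^ (a + 1) - 1 else 0) := by
      rw [← Finset.sum_congr rfl (hcongr (2 * i + 1))]
      rw [ihr]
      ring
    -- membership simplifications
    have hml : ((a, 2 * i) ∈ X ∩ completeSubtree (a, 2 * i)) = ((a, 2 * i) ∈ X) := by
      simp [Finset.mem_inter, self_mem_cs]
    have hmr : ((a, 2 * i + 1) ∈ X ∩ completeSubtree (a, 2 * i + 1)) = ((a, 2 * i + 1) ∈ X) := by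
      simp [Finset.mem_inter, self_mem_cs]
    -- non-membership of root in the subtrees
    have hrXl : (a + 1, i) ∉ X ∩ completeSubtree (a, 2 * i) := fun hh =>
      hnotmem (Finset.mem_union_left _ (Finset.inter_subset_right hh))
    have hrXr : (a + 1, i) ∉ X ∩ completeSubtree (a, 2 * i + 1) := fun hh =>
      hnotmem (Finset.mem_union_right _ (Finset.inter_subset_right hh))
    -- cardinality split
    have hcard : (X.card : ℤ) = (if (a + 1, i) ∈ X then 1 else 0)
        + ((X ∩ completeSubtree (a, 2 * i)).card : ℤ)
        + ((X ∩ completeSubtree (a, 2 * i + 1)).card : ℤ) := by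
      have hXeq : X = (X ∩ {(a + 1, i)}) ∪ ((X ∩ completeSubtree (a, 2 * i))
          ∪ (X ∩ completeSubtree (a, 2 * i + 1))) := by
        ext w
        simp only [Finset.mem_union, Finset.mem_inter, Finset.mem_singleton]
        constructor
        · intro hw
          have := hX hw
          rw [hsplit] at this
          rcases Finset.mem_insert.mp this with h | h
          · exact Or.inl ⟨hw, h⟩
          · rcases Finset.mem_union.mp h with h | h
            · exact Or.inr (Or.inl ⟨hw, h⟩)
            · exact Or.inr (Or.inr ⟨hw, h⟩)
        · rintro (⟨h, -⟩ | ⟨h, -⟩ | ⟨h, -⟩) <;> exact h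
      have hd1 : Disjoint (X ∩ {(a + 1, i)}) ((X ∩ completeSubtree (a, 2 * i))
          ∪ (X ∩ completeSubtree (a, 2 * i + 1))) := by
        apply Finset.disjoint_left.mpr
        intro w hw hw2
        have hwr : w = (a + 1, i) := by
          have := (Finset.mem_inter.mp hw).2
          simpa using this
        subst hwr
        rcases Finset.mem_union.mp hw2 with h | h
        · exact hrXl h
        · exact hrXr h
      have hd2 : Disjoint (X ∩ completeSubtree (a, 2 * i)) (X ∩ completeSubtree (a, 2 * i + 1)) :=
        hdisj.mono Finset.inter_subset_right Finset.inter_subset_right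
      have hcs : (X ∩ {(a + 1, i)}).card = if (a + 1, i) ∈ X then 1 else 0 := by
        by_cases h : (a + 1, i) ∈ X
        · rw [Finset.inter_singleton_of_mem h]
          simp [h]
        · rw [Finset.inter_singleton_of_notMem h]
          simp [h]
      conv_lhs => rw [hXeq]
      rw [Finset.card_union_of_disjoint hd1, Finset.card_union_of_disjoint hd2, hcs]
      push_cast
      by_cases h : (a + 1, i) ∈ X <;> simp [h] <;> ring
    -- sum split
    have hsum : (∑ w ∈ (completeSubtree (a + 1, i)).erase (a + 1, i), fS X w)
        = ((∑ w ∈ (completeSubtree (a, 2 * i)).erase (a, 2 * i), fS X w) + fS X (a, 2 * i))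
          + ((∑ w ∈ (completeSubtree (a, 2 * i + 1)).erase (a, 2 * i + 1), fS X w)
              + fS X (a, 2 * i + 1)) := by
      rw [herase, Finset.sum_union hdisj]
      congr 1
      · rw [Finset.sum_erase_add _ _ self_mem_cs]
      · rw [Finset.sum_erase_add _ _ self_mem_cs]
    rw [hsum, hsuml, hsumr, hcard]
    simp only [hml, hmr]
    have hlev1 : levelT (a, 2 * i) = a + 1 := rfl
    have hlev2 : levelT (a, 2 * i + 1) = a + 1 := rfl
    have hpow : (2 : ℤ) ^ (a + 1 + 1) = 2 * 2 ^ (a + 1) := by ring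
    by_cases h1 : (a + 1, i) ∈ X <;> by_cases h2 : (a, 2 * i) ∈ X <;>
      by_cases h3 : (a, 2 * i + 1) ∈ X <;>
        simp only [fS, hprl, hprr, hlev1, hlev2, h1, h2, h3, if_pos, if_neg, not_true, not_false_iff,
          and_true, and_false, true_and, false_and, if_true, if_false, hpow] <;>
        ring

lemma erase_eq_filter (d : ℕ) (hd : 1 ≤ d) :
    (Bd d).erase (d - 1, 0) = (Bd d).filter (fun v => v.1 + 1 < d) := by
  ext ⟨b, j⟩
  simp only [Finset.mem_erase, Finset.mem_filter]
  constructor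
  · rintro ⟨hne, hmem⟩
    refine ⟨hmem, ?_⟩
    have := (mem_cs).mp hmem
    obtain ⟨hb, h1, h2⟩ := this
    by_contra hcon
    have hbd : b = d - 1 := by omega
    subst hbd
    simp only [Nat.sub_self, pow_zero, mul_one] at h1 h2
    have hj : j = 0 := by omega
    subst hj
    exact hne rfl
  · rintro ⟨hmem, hlt⟩
    refine ⟨?_, hmem⟩
    intro hcon
    rw [Prod.ext_iff] at hcon
    simp only at hcon
    omega

lemma cut_lower (d : ℕ) (hd : 1 ≤ d) (X : Finset (ℕ × ℕ)) (hX : X ⊆ Bd d) :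
    Tz (X.card : ℤ) ≤ 3 * cutBd d X + 3 := by
  have hid := key_identity (d - 1) 0 X hX
  have hd1 : d - 1 + 1 = d := by omega
  rw [hd1] at hid
  have hid' : (X.card : ℤ) = (∑ w ∈ (Bd d).erase (d - 1, 0), fS X w)
      + (if (d - 1, 0) ∈ X then 2 ^ d - 1 else 0) := hid
  set F := (Bd d).filter (fun v => v.1 + 1 < d ∧ ¬((v ∈ X) ↔ parentT v ∈ X)) with hF
  have hcut : cutBd d X = F.card := rfl
  have hsub : F ⊆ (Bd d).erase (d - 1, 0) := by
    rw [erase_eq_filter d hd]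
    intro w hw
    rw [Finset.mem_filter] at hw ⊢
    exact ⟨hw.1, hw.2.1⟩
  have hzero : ∀ w ∈ (Bd d).erase (d - 1, 0), w ∉ F → fS X w = 0 := by
    intro w hw hwF
    have hwB : w ∈ Bd d := (Finset.mem_erase.mp hw).2
    have hlev : w.1 + 1 < d := by
      rw [erase_eq_filter d hd] at hw
      exact (Finset.mem_filter.mp hw).2
    have hiff : (w ∈ X) ↔ (parentT w ∈ X) := by
      by_contra hcon
      exact hwF (Finset.mem_filter.mpr ⟨hwB, hlev, hcon⟩)
    by_cases h1 : w ∈ X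
    · have h2 : parentT w ∈ X := hiff.mp h1
      simp [fS, h1, h2]
    · have h2 : parentT w ∉ X := fun hh => h1 (hiff.mpr hh)
      simp [fS, h1, h2]
  have hfil : (∑ w ∈ F, fS X w) = ∑ w ∈ (Bd d).erase (d - 1, 0), fS X w :=
    Finset.sum_subset hsub hzero
  rw [← hfil] at hid'
  have hsumbound : Tz (∑ w ∈ F, fS X w) ≤ 3 * F.card := by
    apply Tz_sum
    intro w hw
    refine ⟨levelT w, ?_⟩
    have hw' := Finset.mem_filter.mp hw
    have hxor := hw'.2.2
    by_cases h1 : w ∈ X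
    · have h2 : parentT w ∉ X := fun hh => hxor (iff_of_true h1 hh)
      left; simp [fS, h1, h2]
    · have h2 : parentT w ∈ X := by
        by_contra hh
        exact hxor (iff_of_false h1 hh)
      right; simp [fS, h1, h2]
  rw [hid', hcut]
  by_cases hroot : (d - 1, 0) ∈ X
  · rw [if_pos hroot]
    have := (Tz_pm_nu (∑ w ∈ F, fS X w) d).1
    omega
  · rw [if_neg hroot]
    rw [add_zero]
    omega

theorem stmt19 (d : ℕ) (hd : 1 ≤ d) :
    d / 3 - 1 ≤ (Finset.Icc 1 (2 ^ d - 1)).sup (fun i => deltaB d i) := by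
  rcases Nat.lt_or_ge d 2 with hd2 | hd2
  · have : d = 1 := by omega
    subst this
    simp
  · -- main case
    set p := d / 2 - 1 with hp
    have hdp : d / 2 = p + 1 := by omega
    set n := nAlt (p + 1) with hn
    have hn1 : 1 ≤ n := nAlt_pos p
    have hnlt : n < 2 ^ d := by
      have h1 : nAlt (p + 1) < 4 ^ (p + 1) := nAlt_lt (p + 1)
      have h2 : (4 : ℕ) ^ (p + 1) = 2 ^ (2 * (p + 1)) := by
        rw [pow_mul]
        norm_num
      have h3 : (2 : ℕ) ^ (2 * (p + 1)) ≤ 2 ^ d := by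
        apply Nat.pow_le_pow_right (by norm_num)
        omega
      omega
    have hn2 : n ≤ 2 ^ d - 1 := by
      have := Nat.one_le_two_pow (n := d)
      omega
    have hmem : n ∈ Finset.Icc 1 (2 ^ d - 1) := Finset.mem_Icc.mpr ⟨hn1, hn2⟩
    have hcardBd : (Bd d).card = 2 ^ d - 1 := by
      have := card_cs (d - 1) 0
      rw [show d - 1 + 1 = d by omega] at this
      exact this
    -- lower bound on deltaB d n
    have hdelta : d / 3 - 1 ≤ deltaB d n := by
      apply le_csInf
      · obtain ⟨Y, hY, hYcard⟩ := Finset.exists_subset_card_eq (show n ≤ (Bd d).card by omega)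
        exact ⟨cutBd d Y, Y, hY, hYcard, rfl⟩
      · rintro c ⟨X, hXsub, hXcard, hXcut⟩
        have hTz : Tz (X.card : ℤ) ≤ 3 * cutBd d X + 3 := cut_lower d hd X hXsub
        rw [hXcard] at hTz
        have hTzn : Tz (n : ℤ) = 2 * p + 1 := Tz_nAlt p
        rw [hTzn, hXcut] at hTz
        omega
    exact le_trans hdelta (Finset.le_sup hmem)
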